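/- Let G be a graph and let v be a vertex of G that is adjacent to two distinct vertices l and l', each of which has degree one in G. Then td(G) = td(G − {l'}), where G − {l'} is the graph obtained from G by deleting the vertex l'. -/

import Mathlib

/-- `a` is the parent of `b` in the rooted forest given by `par`. -/
def ParentRel {V : Type} (par : V → Option V) (a b : V) : Prop := par b = some a

/-- `a` is a strict ancestor of `b`. -/
def Anc {V : Type} (par : V → Option V) : V → V → Prop :=
  Relation.TransGen (ParentRel par)

/-- `par` describes a rooted forest (no cycles). -/
def IsForest {V : Type} (par : V → Option V) : Prop := ∀ v, ¬ Anc par v v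

/-- `par` is a treedepth decomposition of `G`: a rooted forest on the vertex set of `G`
such that for every edge one endpoint is an ancestor of the other. -/
def IsTDDecomp {V : Type} (G : SimpleGraph V) (par : V → Option V) : Prop :=
  IsForest par ∧ ∀ u v, G.Adj u v → Anc par u v ∨ Anc par v u

/-- The depth of vertex `v` in the forest: the number of vertices on the path
from its root to `v`, i.e. one plus the number of strict ancestors of `v`. -/
noncomputable def vdepth {V : Type} (par : V → Option V) (v : V) : ℕ :=
  Nat.card {a // Anc par a v} + 1

/-- The height (depth) of the forest: the maximal depth of a vertex. -/
noncomputable def fheight {V : Type} (par : V → Option V) : ℕ := ⨆ v, vdepth par v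

/-- The treedepth of `G`: the minimum depth of a treedepth decomposition of `G`. -/
noncomputable def treedepth {V : Type} [Finite V] (G : SimpleGraph V) : ℕ :=
  sInf {d | ∃ par : V → Option V, IsTDDecomp G par ∧ fheight par = d}

namespace TDAux

variable {V : Type}

/-- If `w` is never a value of `par`, then `w` is never a strict ancestor. -/
theorem head_ne {par : V → Option V} {w : V} (h : ∀ x, par x ≠ some w)
    {a b : V} (hab : Anc par a b) : a ≠ w := by
  induction hab using Relation.TransGen.head_induction_on with
  | single h' => rintro rfl; exact h _ h'
  | head h' _ _ => rintro rfl; exact h _ h'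

open Classical in
/-- The "skip `w`" modification of a parent function. -/
noncomputable def skip (par : V → Option V) (w : V) : V → Option V :=
  fun x => if par x = some w then par w else par x

theorem skip_ne {par : V → Option V} (hf : IsForest par) (w x : V) :
    skip par w x ≠ some w := by
  classical
  by_cases h : par x = some w
  · simp only [skip, if_pos h]
    intro h2
    exact hf w (Relation.TransGen.single h2)
  · simp only [skip, if_neg h]
    exact h

/-- Transfer ancestry between two parent functions agreeing off `w`, when
`w` never occurs as a parent. -/
theorem anc_congr {f g : V → Option V} {w : V} (hfne : ∀ x, f x ≠ some w)
    (hfg : ∀ x, x ≠ w → f x = g x) {a b : V} (hb : b ≠ w)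
    (h : Anc f a b) : Anc g a b := by
  induction h using Relation.TransGen.head_induction_on with
  | single h' =>
    rename_i a'
    have h'' : f b = some a' := h'
    exact Relation.TransGen.single (show g b = some a' by rw [← hfg b hb]; exact h'')
  | head h' hcb ih =>
    rename_i a' c
    have hc : c ≠ w := head_ne hfne hcb
    have h'' : f c = some a' := h'
    exact ih.head (show g c = some a' by rw [← hfg c hc]; exact h'')

/-- Going down from Anc (skip par w) to Anc par. -/
theorem anc_of_skip {par : V → Option V} {w : V} (hf : IsForest par)
    {a b : V} (h : Anc (skip par w) a b) : Anc par a b := by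
  classical
  have key : ∀ x y : V, ParentRel (skip par w) x y → Anc par x y := by
    intro x y hxy
    have hxy' : skip par w y = some x := hxy
    by_cases hyw : par y = some w
    · simp only [skip, if_pos hyw] at hxy'
      exact (Relation.TransGen.single (show ParentRel par x w from hxy')).tail
        (show ParentRel par w y from hyw)
    · simp only [skip, if_neg hyw] at hxy'
      exact Relation.TransGen.single hxy'
  induction h with
  | single h' => exact key _ _ h'
  | tail _ h2 ih => exact ih.trans (key _ _ h2)

/-- Going up from Anc par to Anc (skip par w), when both endpoints avoid `w`. -/
theorem anc_skip {par : V → Option V} {w : V} (hf : IsForest par)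
    {a b : V} (hb : b ≠ w) (h : Anc par a b) :
    (a ≠ w → Anc (skip par w) a b) ∧
      (a = w → ∀ c, par w = some c → Relation.ReflTransGen (ParentRel (skip par w)) c b) := by
  classical
  induction h using Relation.TransGen.head_induction_on with
  | single h' =>
    rename_i a'
    have h'' : par b = some a' := h'
    constructor
    · intro ha
      refine Relation.TransGen.single ?_
      show skip par w b = some a'
      simp only [skip, h'']
      simp [ha]
    · intro haw c hc
      refine Relation.ReflTransGen.single ?_
      show skip par w b = some c
      simp only [skip, h'']
      rw [if_pos (by rw [haw]), hc]
  | head h' hmb ih =>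
    rename_i a' m
    have h'' : par m = some a' := h'
    constructor
    · intro ha
      by_cases hm : m = w
      · have hpw : par w = some a' := by rw [← hm]; exact h''
        have hrtg := ih.2 hm a' hpw
        have hne : a' ≠ b := by
          rintro rfl
          exact hf a' (hmb.head h')
        rcases Relation.reflTransGen_iff_eq_or_transGen.mp hrtg with heq | htg
        · exact absurd heq.symm hne
        · exact htg
      · have h1 : ParentRel (skip par w) a' m := by
          show skip par w m = some a'
          simp only [skip, h'']
          simp [ha]
        exact (ih.1 hm).head h1
    · intro haw c hc
      have hm : m ≠ w := by
        rintro rfl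
        exact hf m (Relation.TransGen.single (show par m = some m by rw [h'', haw]))
      have h1 : ParentRel (skip par w) c m := by
        show skip par w m = some c
        simp only [skip, h'']
        rw [if_pos (by rw [haw]), hc]
      exact Relation.ReflTransGen.head h1 ((ih.1 hm).to_reflTransGen)

theorem anc_skip' {par : V → Option V} {w : V} (hf : IsForest par)
    {a b : V} (ha : a ≠ w) (hb : b ≠ w) (h : Anc par a b) :
    Anc (skip par w) a b :=
  (anc_skip hf hb h).1 ha

theorem vdepth_le_fheight [Finite V] (par : V → Option V) (x : V) :
    vdepth par x ≤ fheight par :=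
  le_ciSup (Set.Finite.bddAbove (Set.finite_range _)) x

theorem fheight_le [Finite V] [Nonempty V] {par : V → Option V} {n : ℕ}
    (h : ∀ x, vdepth par x ≤ n) : fheight par ≤ n :=
  ciSup_le h

theorem vdepth_le_vdepth {A B : Type} [Finite B] {f : A → Option A} {g : B → Option B}
    {x : A} {y : B} (m : {a : A // Anc f a x} → {b : B // Anc g b y})
    (hm : ∀ p q, (m p).1 = (m q).1 → p.1 = q.1) : vdepth f x ≤ vdepth g y := by
  unfold vdepth
  have hinj : Function.Injective m := fun p q hpq =>
    Subtype.ext (hm p q (congrArg Subtype.val hpq))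
  have := Nat.card_le_card_of_injective m hinj
  omega

/-- Every graph on a finite vertex type has a treedepth decomposition (a path). -/
theorem exists_decomp [Finite V] (G : SimpleGraph V) :
    ∃ par : V → Option V, IsTDDecomp G par := by
  obtain ⟨n, ⟨e⟩⟩ := Finite.exists_equiv_fin V
  set par : V → Option V := fun x =>
    if h : (e x : ℕ) = 0 then none
    else some (e.symm ⟨(e x : ℕ) - 1, lt_of_le_of_lt (Nat.sub_le _ _) (e x).isLt⟩) with hpar
  have hstep : ∀ x c, par x = some c → (e c : ℕ) + 1 = (e x : ℕ) := by
    intro x c h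
    rw [hpar] at h
    dsimp only at h
    by_cases h0 : (e x : ℕ) = 0
    · rw [dif_pos h0] at h
      exact absurd h (by simp)
    · rw [dif_neg h0] at h
      have hc := (Option.some_inj.mp h).symm
      rw [hc]
      simp only [Equiv.apply_symm_apply]
      omega
  have mono : ∀ a b, Anc par a b → (e a : ℕ) < (e b : ℕ) := by
    intro a b h
    induction h with
    | single h' =>
      rename_i b'
      have := hstep b' a h'
      omega
    | tail _ h2 ih =>
      rename_i b' c _
      have := hstep c b' h2
      omega
  have key : ∀ k (a b : V), (e b : ℕ) = k → (e a : ℕ) < (e b : ℕ) → Anc par a b := by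
    intro k
    induction k using Nat.strong_induction_on with
    | _ k ih =>
      intro a b hk hab
      have hb0 : (e b : ℕ) ≠ 0 := by omega
      set c := e.symm ⟨(e b : ℕ) - 1, lt_of_le_of_lt (Nat.sub_le _ _) (e b).isLt⟩ with hc
      have hpc : ParentRel par c b := by
        show par b = some c
        rw [hpar]
        dsimp only
        rw [dif_neg hb0]
      have hec : (e c : ℕ) = (e b : ℕ) - 1 := by rw [hc]; simp
      rcases eq_or_lt_of_le (show (e a : ℕ) ≤ (e b : ℕ) - 1 by omega) with heq | hlt
      · have : a = c := by
          apply e.injective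
          apply Fin.ext
          rw [hec, heq]
        exact Relation.TransGen.single (this ▸ hpc)
      · exact (ih ((e b : ℕ) - 1) (by omega) a c hec (by omega)).tail hpc
  refine ⟨par, ?_, ?_⟩
  · intro x hx
    exact absurd (mono _ _ hx) (lt_irrefl _)
  · intro u x hux
    have hne : u ≠ x := hux.ne
    have : (e u : ℕ) ≠ (e x : ℕ) := fun h => hne (e.injective (Fin.ext h))
    rcases lt_or_gt_of_ne this with h | h
    · exact Or.inl (key _ u x rfl h)
    · exact Or.inr (key _ x u rfl h)

/-- Normalization: if `l` has unique neighbour `v`, we can assume `v` is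
an ancestor of `l` without increasing height. -/
theorem normalize {W : Type} [Finite W] (H : SimpleGraph W) (par : W → Option W)
    (hd : IsTDDecomp H par) {v l : W} (hvl : H.Adj v l)
    (hleaf : ∀ u, H.Adj u l → u = v) :
    ∃ parN, IsTDDecomp H parN ∧ fheight parN ≤ fheight par ∧ Anc parN v l := by
  classical
  have hf := hd.1
  have hvne : v ≠ l := hvl.ne
  have : Nonempty W := ⟨v⟩
  rcases hd.2 v l hvl with hcase | hcase
  · exact ⟨par, hd, le_refl _, hcase⟩
  -- case B : Anc par l v
  set sk := skip par l with hsk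
  set parN : W → Option W := fun x => if x = l then some v else sk x with hparN
  have hskne : ∀ x, sk x ≠ some l := fun x => skip_ne hf l x
  have hPNne : ∀ x, parN x ≠ some l := by
    intro x
    by_cases hx : x = l
    · rw [hparN]
      dsimp only
      rw [if_pos hx]
      simp [hvne]
    · rw [hparN]
      dsimp only
      rw [if_neg hx]
      exact hskne x
  have agree : ∀ x, x ≠ l → parN x = sk x := by
    intro x hx; rw [hparN]; dsimp only; rw [if_neg hx]
  have agree' : ∀ x, x ≠ l → sk x = parN x := fun x hx => (agree x hx).symm
  have t1 : ∀ a b : W, b ≠ l → (Anc parN a b ↔ Anc sk a b) :=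
    fun a b hb => ⟨anc_congr hPNne agree hb, anc_congr hskne agree' hb⟩
  have down : ∀ a b : W, b ≠ l → Anc parN a b → Anc par a b :=
    fun a b hb h => anc_of_skip hf ((t1 a b hb).mp h)
  have up : ∀ a b : W, a ≠ l → b ≠ l → Anc par a b → Anc parN a b :=
    fun a b ha hb h => (t1 a b hb).mpr (anc_skip' hf ha hb h)
  have hNl : ParentRel parN v l := by
    show parN l = some v
    rw [hparN]; dsimp only; rw [if_pos rfl]
  have ancl : ∀ a, Anc parN a l → a = v ∨ Anc parN a v := by
    intro a h
    obtain ⟨c, hrtg, hc⟩ := Relation.TransGen.tail'_iff.mp h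
    have hcv : c = v := by
      have h2 : parN l = some c := hc
      rw [hNl] at h2
      exact (Option.some_inj.mp h2).symm
    subst hcv
    rcases Relation.reflTransGen_iff_eq_or_transGen.mp hrtg with heq | htg
    · exact Or.inl heq.symm
    · exact Or.inr htg
  have hforest : IsForest parN := by
    intro x hx
    by_cases hxl : x = l
    · rw [hxl] at hx
      rcases ancl _ hx with heq | hanc
      · exact hvne heq.symm
      · exact (head_ne hPNne hanc) rfl
    · exact hf x (down x x hxl hx)
  refine ⟨parN, ⟨hforest, ?_⟩, ?_, Relation.TransGen.single hNl⟩
  · -- edges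
    intro u x hux
    by_cases hu : u = l
    · rw [hu] at hux ⊢
      have hx : x = v := hleaf x hux.symm
      rw [hx]
      exact Or.inr (Relation.TransGen.single hNl)
    · by_cases hx : x = l
      · rw [hx] at hux ⊢
        have hu' : u = v := hleaf u hux
        rw [hu']
        exact Or.inl (Relation.TransGen.single hNl)
      · rcases hd.2 u x hux with h | h
        · exact Or.inl (up u x hu hx h)
        · exact Or.inr (up x u hx hu h)
  · -- height
    apply fheight_le
    intro x
    by_cases hx : x = l
    · rw [hx]
      -- vdepth parN l ≤ vdepth par v
      have hsub : {a | Anc parN a l} ⊆ insert v ({a | Anc par a v} \ {l}) := by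
        intro a ha
        rcases ancl a ha with heq | hanc
        · exact heq ▸ Set.mem_insert _ _
        · refine Set.mem_insert_of_mem _ ⟨down a v hvne hanc, ?_⟩
          simp only [Set.mem_singleton_iff]
          exact head_ne hPNne hanc
      have hlmem : l ∈ {a | Anc par a v} := hcase
      have h1 : ({a | Anc par a v} \ {l}).ncard = {a | Anc par a v}.ncard - 1 :=
        Set.ncard_diff_singleton_of_mem hlmem
      have h2 : {a | Anc parN a l}.ncard ≤ (insert v ({a | Anc par a v} \ {l})).ncard :=
        Set.ncard_le_ncard hsub (Set.toFinite _)
      have h3 : (insert v ({a | Anc par a v} \ {l})).ncard ≤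
          ({a | Anc par a v} \ {l}).ncard + 1 := Set.ncard_insert_le _ _
      have h4 : 0 < {a | Anc par a v}.ncard := by
        rw [Set.ncard_pos (Set.toFinite _)]
        exact ⟨l, hlmem⟩
      have hv1 : vdepth parN l = {a | Anc parN a l}.ncard + 1 := by
        unfold vdepth
        congr 1
      have hv2 : vdepth par v = {a | Anc par a v}.ncard + 1 := by
        unfold vdepth
        congr 1
      have : vdepth parN l ≤ vdepth par v := by omega
      exact this.trans (vdepth_le_fheight par v)
    · have : vdepth parN x ≤ vdepth par x := by
        apply vdepth_le_vdepth (fun p => ⟨p.1, down p.1 x hx p.2⟩)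
        intro p q h
        exact h
      exact this.trans (vdepth_le_fheight par x)

end TDAux

open TDAux in
/-- If `v` is adjacent to two distinct vertices `l` and `l'` of degree one,
then `td(G) = td(G - l')`. -/
theorem td_remove_twin_leaf {V : Type} [Finite V] (G : SimpleGraph V) (v l l' : V)
    (hll' : l ≠ l') (hvl : G.Adj v l) (hvl' : G.Adj v l')
    (hdl : (G.neighborSet l).ncard = 1) (hdl' : (G.neighborSet l').ncard = 1) :
    treedepth G = treedepth (G.induce {x | x ≠ l'}) := by
  classical
  have hvne' : v ≠ l' := hvl'.ne
  have : Nonempty V := ⟨v⟩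
  -- unique neighbours
  have hNset' : G.neighborSet l' = {v} := by
    obtain ⟨a, ha⟩ := Set.ncard_eq_one.mp hdl'
    have hv : v ∈ G.neighborSet l' := hvl'.symm
    rw [ha] at hv ⊢
    rw [Set.mem_singleton_iff] at hv
    rw [hv]
  have hNset : G.neighborSet l = {v} := by
    obtain ⟨a, ha⟩ := Set.ncard_eq_one.mp hdl
    have hv : v ∈ G.neighborSet l := hvl.symm
    rw [ha] at hv ⊢
    rw [Set.mem_singleton_iff] at hv
    rw [hv]
  have hNl' : ∀ u, G.Adj u l' → u = v := by
    intro u hu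
    have : u ∈ G.neighborSet l' := hu.symm
    rw [hNset'] at this
    exact this
  have hNl : ∀ u, G.Adj u l → u = v := by
    intro u hu
    have : u ∈ G.neighborSet l := hu.symm
    rw [hNset] at this
    exact this
  set s : Set V := {x | x ≠ l'} with hs
  set H := G.induce s with hH
  have hls : l ∈ s := hll'
  have hvs : v ∈ s := hvne'
  haveI : Nonempty ↥s := ⟨⟨l, hls⟩⟩
  set lhat : ↥s := ⟨l, hls⟩ with hlhat
  set vhat : ↥s := ⟨v, hvs⟩ with hvhat
  have hadj_iff : ∀ a b : ↥s, H.Adj a b ↔ G.Adj ↑a ↑b := by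
    intro a b
    rw [hH]
    simp [SimpleGraph.comap_adj]
  have hSG : {d | ∃ par : V → Option V, IsTDDecomp G par ∧ fheight par = d}.Nonempty := by
    obtain ⟨par, hpar⟩ := exists_decomp G
    exact ⟨fheight par, par, hpar, rfl⟩
  have hSH : {d | ∃ par : ↥s → Option ↥s, IsTDDecomp H par ∧ fheight par = d}.Nonempty := by
    obtain ⟨par, hpar⟩ := exists_decomp H
    exact ⟨fheight par, par, hpar, rfl⟩
  apply le_antisymm
  · -- treedepth G ≤ treedepth H : take optimal decomposition of H, normalize, extend
    obtain ⟨par', hd', hfh'⟩ := Nat.sInf_mem hSH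
    have hHvl : H.Adj vhat lhat := (hadj_iff vhat lhat).mpr hvl
    have hHleaf : ∀ u : ↥s, H.Adj u lhat → u = vhat := by
      intro u hu
      have := hNl ↑u ((hadj_iff u lhat).mp hu)
      exact Subtype.ext this
    obtain ⟨parN, hdN, hfhN, hancN⟩ := normalize H par' hd' hHvl hHleaf
    have hfN := hdN.1
    -- extension to V
    set par2 : V → Option V := fun x =>
      if h : x = l' then Option.map Subtype.val (parN lhat)
      else Option.map Subtype.val (parN ⟨x, h⟩) with hpar2
    have hne2 : ∀ x, par2 x ≠ some l' := by
      intro x h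
      rw [hpar2] at h
      dsimp only at h
      by_cases hx : x = l'
      · rw [dif_pos hx] at h
        rcases Option.map_eq_some_iff.mp h with ⟨c, _, hc⟩
        exact c.2 hc
      · rw [dif_neg hx] at h
        rcases Option.map_eq_some_iff.mp h with ⟨c, _, hc⟩
        exact c.2 hc
    have hstep : ∀ (a : V) (b : ↥s), ParentRel par2 a ↑b ↔
        ∃ ha : a ∈ s, ParentRel parN ⟨a, ha⟩ b := by
      intro a b
      have hbs : (↑b : V) ≠ l' := b.2
      have hval : par2 ↑b = Option.map Subtype.val (parN b) := by
        rw [hpar2]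
        dsimp only
        rw [dif_neg hbs, Subtype.coe_eta]
      constructor
      · intro h
        have h' : Option.map Subtype.val (parN b) = some a := by rw [← hval]; exact h
        rcases Option.map_eq_some_iff.mp h' with ⟨c, hc, hca⟩
        subst hca
        exact ⟨c.2, by rw [Subtype.coe_eta]; exact hc⟩
      · rintro ⟨ha, h⟩
        show par2 ↑b = some a
        rw [hval, show parN b = some ⟨a, ha⟩ from h]
        rfl
    have hstepl' : ∀ a : V, ParentRel par2 a l' ↔
        ∃ ha : a ∈ s, ParentRel parN ⟨a, ha⟩ lhat := by
      intro a
      have hval : par2 l' = Option.map Subtype.val (parN lhat) := by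
        rw [hpar2]
        dsimp only
        rw [dif_pos rfl]
      constructor
      · intro h
        have h' : Option.map Subtype.val (parN lhat) = some a := by rw [← hval]; exact h
        rcases Option.map_eq_some_iff.mp h' with ⟨c, hc, hca⟩
        subst hca
        exact ⟨c.2, by rw [Subtype.coe_eta]; exact hc⟩
      · rintro ⟨ha, h⟩
        show par2 l' = some a
        rw [hval, show parN lhat = some ⟨a, ha⟩ from h]
        rfl
    have hup2 : ∀ a b : ↥s, Anc parN a b → Anc par2 ↑a ↑b := by
      intro a b h
      induction h with
      | single h' =>
        exact Relation.TransGen.single ((hstep _ _).mpr ⟨a.2, h'⟩)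
      | tail _ h2 ih =>
        rename_i b' c _
        exact ih.tail ((hstep _ _).mpr ⟨b'.2, h2⟩)
    have hdown2 : ∀ (a : V) (b : ↥s), Anc par2 a ↑b → ∃ ha : a ∈ s, Anc parN ⟨a, ha⟩ b := by
      intro a b h
      induction h using Relation.TransGen.head_induction_on with
      | single h' =>
        obtain ⟨ha, hp⟩ := (hstep _ _).mp h'
        exact ⟨ha, Relation.TransGen.single hp⟩
      | head h1 h2 ih =>
        rename_i a' c
        have hc : c ≠ l' := head_ne hne2 h2
        obtain ⟨hc', hanc⟩ := ih
        have h1' : ParentRel par2 a' ↑(⟨c, hc⟩ : ↥s) := h1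
        obtain ⟨ha, hp⟩ := (hstep a' ⟨c, hc⟩).mp h1'
        exact ⟨ha, hanc.head hp⟩
    have hancl' : ∀ a : V, Anc par2 a l' → ∃ ha : a ∈ s, Anc parN ⟨a, ha⟩ lhat := by
      intro a h
      obtain ⟨c, hrtg, hc⟩ := Relation.TransGen.tail'_iff.mp h
      obtain ⟨hcs, hp⟩ := (hstepl' c).mp hc
      rcases Relation.reflTransGen_iff_eq_or_transGen.mp hrtg with heq | htg
      · subst heq
        exact ⟨hcs, Relation.TransGen.single hp⟩
      · have htg' : Anc par2 a ↑(⟨c, hcs⟩ : ↥s) := htg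
        obtain ⟨ha, hanc⟩ := hdown2 a ⟨c, hcs⟩ htg'
        exact ⟨ha, hanc.tail hp⟩
    have hancl'2 : ∀ a : ↥s, Anc parN a lhat → Anc par2 ↑a l' := by
      intro a h
      obtain ⟨c, hrtg, hc⟩ := Relation.TransGen.tail'_iff.mp h
      have hstepc : ParentRel par2 ↑c l' := (hstepl' ↑c).mpr ⟨c.2, hc⟩
      rcases Relation.reflTransGen_iff_eq_or_transGen.mp hrtg with heq | htg
      · rw [← heq]
        exact Relation.TransGen.single hstepc
      · exact (hup2 a c htg).tail hstepc
    have hforest2 : IsForest par2 := by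
      intro x hx
      by_cases hxl : x = l'
      · exact (head_ne hne2 hx) hxl
      · obtain ⟨ha, hanc⟩ := hdown2 x ⟨x, hxl⟩ hx
        exact hfN ⟨x, hxl⟩ hanc
    have hd2 : IsTDDecomp G par2 := by
      refine ⟨hforest2, ?_⟩
      intro u x hux
      by_cases hu : u = l'
      · rw [hu] at hux ⊢
        have hx : x = v := hNl' x hux.symm
        rw [hx]
        exact Or.inr (hancl'2 vhat hancN)
      · by_cases hx : x = l'
        · rw [hx] at hux ⊢
          have hu' : u = v := hNl' u hux
          rw [hu']
          exact Or.inl (hancl'2 vhat hancN)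
        · have hadj : H.Adj ⟨u, hu⟩ ⟨x, hx⟩ := (hadj_iff _ _).mpr hux
          rcases hdN.2 _ _ hadj with h | h
          · exact Or.inl (hup2 _ _ h)
          · exact Or.inr (hup2 _ _ h)
    have hfh2 : fheight par2 ≤ fheight parN := by
      apply fheight_le
      intro x
      by_cases hx : x = l'
      · rw [hx]
        have : vdepth par2 l' ≤ vdepth parN lhat := by
          apply vdepth_le_vdepth (fun p =>
            ⟨⟨p.1, (hancl' p.1 p.2).choose⟩, (hancl' p.1 p.2).choose_spec⟩)
          intro p q h
          exact congrArg (Subtype.val : ↥s → V) h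
        exact this.trans (vdepth_le_fheight parN lhat)
      · have : vdepth par2 x ≤ vdepth parN ⟨x, hx⟩ := by
          apply vdepth_le_vdepth (fun p =>
            ⟨⟨p.1, (hdown2 p.1 ⟨x, hx⟩ p.2).choose⟩, (hdown2 p.1 ⟨x, hx⟩ p.2).choose_spec⟩)
          intro p q h
          exact congrArg (Subtype.val : ↥s → V) h
        exact this.trans (vdepth_le_fheight parN ⟨x, hx⟩)
    calc treedepth G ≤ fheight par2 := Nat.sInf_le ⟨par2, hd2, rfl⟩
      _ ≤ fheight parN := hfh2
      _ ≤ fheight par' := hfhN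
      _ = treedepth H := hfh'
  · -- treedepth H ≤ treedepth G : restriction
    obtain ⟨par, hd, hfh⟩ := Nat.sInf_mem hSG
    have hf := hd.1
    set sk := skip par l' with hsk
    have hskne : ∀ x, sk x ≠ some l' := fun x => skip_ne hf l' x
    set par' : ↥s → Option ↥s := fun b =>
      (sk ↑b).bind (fun a => if h : a = l' then none else some ⟨a, h⟩) with hpar'
    have hstep : ∀ a b : ↥s, ParentRel par' a b ↔ ParentRel sk ↑a ↑b := by
      intro a b
      show par' b = some a ↔ sk ↑b = some ↑a
      rw [hpar']
      dsimp only
      cases h : sk ↑b with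
      | none => simp
      | some c =>
        have hc : c ≠ l' := by rintro rfl; exact hskne ↑b h
        rw [Option.bind_some, dif_neg hc]
        constructor
        · intro h'
          have h2 := Option.some_inj.mp h'
          rw [← h2]
        · intro h'
          have h2 : c = ↑a := Option.some_inj.mp h'
          exact congrArg some (Subtype.ext h2)
    have hup : ∀ a b : ↥s, Anc par' a b → Anc sk ↑a ↑b := by
      intro a b h
      induction h with
      | single h' => exact Relation.TransGen.single ((hstep _ _).mp h')
      | tail _ h2 ih => exact ih.tail ((hstep _ _).mp h2)
    have hdown : ∀ (a : V) (b : ↥s), Anc sk a ↑b → ∃ ha : a ∈ s, Anc par' ⟨a, ha⟩ b := by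
      intro a b h
      induction h using Relation.TransGen.head_induction_on with
      | single h' =>
        rename_i a'
        have ha : a' ≠ l' := by
          intro haeq
          apply hskne ↑b
          rw [← haeq]
          exact h'
        exact ⟨ha, Relation.TransGen.single ((hstep ⟨a', ha⟩ b).mpr h')⟩
      | head h1 h2 ih =>
        rename_i a' c
        have hc : c ≠ l' := head_ne hskne h2
        obtain ⟨hc', hanc⟩ := ih
        have ha : a' ≠ l' := by rintro rfl; exact hskne c h1
        have hp : ParentRel par' ⟨a', ha⟩ ⟨c, hc'⟩ := (hstep ⟨a', ha⟩ ⟨c, hc'⟩).mpr h1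
        exact ⟨ha, hanc.head hp⟩
    have hd' : IsTDDecomp H par' := by
      constructor
      · intro x hx
        exact hf ↑x (anc_of_skip hf (hup x x hx))
      · intro a b hab
        have hGab : G.Adj ↑a ↑b := (hadj_iff a b).mp hab
        rcases hd.2 ↑a ↑b hGab with h | h
        · obtain ⟨ha, hanc⟩ := hdown ↑a b (anc_skip' hf a.2 b.2 h)
          exact Or.inl hanc
        · obtain ⟨hb, hanc⟩ := hdown ↑b a (anc_skip' hf b.2 a.2 h)
          exact Or.inr hanc
    have hfh' : fheight par' ≤ fheight par := by
      apply fheight_le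
      intro x
      have : vdepth par' x ≤ vdepth par ↑x := by
        apply vdepth_le_vdepth (fun p =>
          ⟨↑p.1, anc_of_skip hf (hup p.1 x p.2)⟩)
        intro p q h
        exact Subtype.ext h
      exact this.trans (vdepth_le_fheight par ↑x)
    calc treedepth H ≤ fheight par' := Nat.sInf_le ⟨par', hd', rfl⟩
      _ ≤ fheight par := hfh'
      _ = treedepth G := hfh
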